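/- Let X be the topological sum of Cantor space and a single isolated point (i.e., the disjoint union (ℕ → Bool) ⊕ Unit with the sum topology). Then the pair (X, 2^ω) satisfies UU. -/

import Mathlib

/-- first `n` values of `x` as a list -/
def res (x : ℕ → Bool) (n : ℕ) : List Bool := (List.range n).map x

lemma res_zero (x : ℕ → Bool) : res x 0 = [] := rfl

lemma res_succ (x : ℕ → Bool) (n : ℕ) : res x (n+1) = res x n ++ [x n] := by
  simp [res, List.range_succ]

lemma res_length (x : ℕ → Bool) (n : ℕ) : (res x n).length = n := by simp [res]

lemma res_eq_of_agree {x y : ℕ → Bool} {n : ℕ} (h : ∀ i < n, x i = y i) :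
    res x n = res y n := by
  simp only [res]
  apply List.map_congr_left
  intro i hi
  exact h i (List.mem_range.mp hi)

lemma agree_of_res_eq {x y : ℕ → Bool} {n : ℕ} (h : res x n = res y n) :
    ∀ i < n, x i = y i := by
  induction n with
  | zero => intro i hi; omega
  | succ n ih =>
    rw [res_succ, res_succ] at h
    have h2 := List.append_inj h (by simp [res_length])
    intro i hi
    rcases Nat.lt_succ_iff_lt_or_eq.mp hi with h' | h'
    · exact ih h2.1 i h'
    · subst h'; simpa using h2.2

/-- which children (`false` = left, `true` = right) a node of branching type `t` has -/
def keep : Fin 3 → Bool → Bool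
  | t, false => decide (t ≠ 1)
  | t, true => decide (t ≠ 0)

lemma keep_or (t : Fin 3) : keep t false = true ∨ keep t true = true := by revert t; decide

lemma keep_inj {t t' : Fin 3} (h0 : keep t false = keep t' false)
    (h1 : keep t true = keep t' true) : t = t' := by revert h0 h1; revert t t'; decide

def childrenOf (s : List Bool) (t : Fin 3) : List (List Bool) :=
  (if keep t false then [s ++ [false]] else []) ++ (if keep t true then [s ++ [true]] else [])

lemma mem_childrenOf {u s : List Bool} {t : Fin 3} :
    u ∈ childrenOf s t ↔ ∃ b, keep t b = true ∧ u = s ++ [b] := by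
  unfold childrenOf
  constructor
  · intro h
    rcases List.mem_append.mp h with h | h <;>
      [ (refine ⟨false, ?_, ?_⟩); (refine ⟨true, ?_, ?_⟩)] <;>
      · split at h <;> simp_all
  · rintro ⟨b, hb, rfl⟩
    cases b <;> simp [hb]

lemma childrenOf_ne_nil (s : List Bool) (t : Fin 3) : childrenOf s t ≠ [] := by
  rcases keep_or t with h | h <;> simp [childrenOf, h]

lemma childrenOf_length_le (s : List Bool) (t : Fin 3) : (childrenOf s t).length ≤ 2 := by
  unfold childrenOf
  split <;> split <;> simp

/-- children of a list of nodes, labels taken from `c` starting at index `i` -/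
def kids (c : ℕ → Fin 3) : List (List Bool) → ℕ → List (List Bool)
  | [], _ => []
  | s :: L, i => childrenOf s (c i) ++ kids c L (i+1)

lemma mem_kids {c : ℕ → Fin 3} {L : List (List Bool)} {i : ℕ} {u : List Bool} :
    u ∈ kids c L i ↔ ∃ j s b, L[j]? = some s ∧ keep (c (i + j)) b = true ∧ u = s ++ [b] := by
  induction L generalizing i with
  | nil => simp [kids]
  | cons s L ih =>
    simp only [kids, List.mem_append, mem_childrenOf, ih]
    constructor
    · rintro (⟨b, hb, rfl⟩ | ⟨j, t, b, hget, hb, rfl⟩)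
      · exact ⟨0, s, b, rfl, by simpa using hb, rfl⟩
      · exact ⟨j+1, t, b, by simpa using hget, by rwa [show i + (j+1) = i + 1 + j by omega], rfl⟩
    · rintro ⟨j, t, b, hget, hb, rfl⟩
      cases j with
      | zero =>
        simp only [List.getElem?_cons_zero, Option.some.injEq] at hget
        subst hget
        exact Or.inl ⟨b, by simpa using hb, rfl⟩
      | succ j =>
        exact Or.inr ⟨j, t, b, by simpa using hget,
          by rwa [show i + 1 + j = i + (j+1) by omega], rfl⟩

lemma dropLast_of_mem_kids {c : ℕ → Fin 3} {L : List (List Bool)} {i : ℕ} {u : List Bool}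
    (h : u ∈ kids c L i) : u.dropLast ∈ L := by
  rcases mem_kids.mp h with ⟨j, t, b, hget, _, rfl⟩
  rw [List.dropLast_concat]
  exact List.mem_of_getElem? hget

lemma length_of_mem_kids {c : ℕ → Fin 3} {L : List (List Bool)} {i n : ℕ} {u : List Bool}
    (hL : ∀ s ∈ L, s.length = n) (h : u ∈ kids c L i) : u.length = n + 1 := by
  rcases mem_kids.mp h with ⟨j, t, b, hget, _, rfl⟩
  have h' : t.length = n := hL _ (List.mem_of_getElem? hget)
  simp [h']

lemma kids_nodup {c : ℕ → Fin 3} {L : List (List Bool)} (hL : L.Nodup) (i : ℕ) :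
    (kids c L i).Nodup := by
  induction L generalizing i with
  | nil => simp [kids]
  | cons s L ih =>
    rcases List.nodup_cons.mp hL with ⟨hs, hL'⟩
    refine List.Nodup.append ?_ (ih hL' (i+1)) ?_
    · unfold childrenOf
      split <;> split <;> simp
    · intro u hu hu'
      rcases mem_childrenOf.mp hu with ⟨b, _, rfl⟩
      have := dropLast_of_mem_kids hu'
      rw [List.dropLast_concat] at this
      exact hs this

lemma kids_ne_nil {c : ℕ → Fin 3} {L : List (List Bool)} (hL : L ≠ []) (i : ℕ) :
    kids c L i ≠ [] := by
  cases L with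
  | nil => simp at hL
  | cons s L => simp only [kids]; intro h; exact childrenOf_ne_nil s (c i) (List.append_eq_nil_iff.mp h).1

lemma kids_length_le (c : ℕ → Fin 3) (L : List (List Bool)) (i : ℕ) :
    (kids c L i).length ≤ 2 * L.length := by
  induction L generalizing i with
  | nil => simp [kids]
  | cons s L ih =>
    simp only [kids, List.length_append, List.length_cons]
    have := childrenOf_length_le s (c i)
    have := ih (i+1)
    omega

lemma kids_congr {c c' : ℕ → Fin 3} {L : List (List Bool)} {i : ℕ}
    (h : ∀ j < L.length, c (i + j) = c' (i + j)) : kids c L i = kids c' L i := by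
  induction L generalizing i with
  | nil => simp [kids]
  | cons s L ih =>
    simp only [kids]
    rw [show c i = c' i by simpa using h 0 (by simp), ih]
    intro j hj
    have := h (j+1) (by simpa using hj)
    rwa [show i + (j+1) = i + 1 + j by omega] at this

/-- the levels of the tree coded by `c`, with running offsets into the stream `c` -/
def lv (c : ℕ → Fin 3) : ℕ → List (List Bool) × ℕ
  | 0 => ([[]], 0)
  | n+1 => (kids c (lv c n).1 (lv c n).2, (lv c n).2 + (lv c n).1.length)

/-- the tree coded by `c` -/
def Tset (c : ℕ → Fin 3) : Set (List Bool) := {s | s ∈ (lv c s.length).1}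

lemma lv_length {c : ℕ → Fin 3} : ∀ n, ∀ s ∈ (lv c n).1, s.length = n
  | 0 => by simp [lv]
  | n+1 => fun s hs => length_of_mem_kids (lv_length n) hs

lemma lv_nodup (c : ℕ → Fin 3) : ∀ n, (lv c n).1.Nodup
  | 0 => by simp [lv]
  | n+1 => kids_nodup (lv_nodup c n) _

lemma lv_ne_nil (c : ℕ → Fin 3) : ∀ n, (lv c n).1 ≠ []
  | 0 => by simp [lv]
  | n+1 => kids_ne_nil (lv_ne_nil c n) _

lemma lv_off_lt (c : ℕ → Fin 3) (n : ℕ) : (lv c n).2 < (lv c (n+1)).2 := by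
  have h0 := lv_ne_nil c n
  have : (lv c n).1.length ≠ 0 := by simpa [List.length_eq_zero_iff] using h0
  show (lv c n).2 < (lv c n).2 + (lv c n).1.length
  omega

lemma lv_off_ge (c : ℕ → Fin 3) : ∀ n, n ≤ (lv c n).2
  | 0 => by simp [lv]
  | n+1 => lt_of_le_of_lt (lv_off_ge c n) (lv_off_lt c n)

lemma lv_bound (c : ℕ → Fin 3) : ∀ n, (lv c n).1.length ≤ 2^n ∧ (lv c n).2 + (lv c n).1.length ≤ 2^(n+1)
  | 0 => by simp [lv]
  | n+1 => by
    obtain ⟨h0, h1⟩ := lv_bound c n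
    have h2 := kids_length_le c (lv c n).1 (lv c n).2
    have e1 : (lv c (n+1)).1 = kids c (lv c n).1 (lv c n).2 := rfl
    have e2 : (lv c (n+1)).2 = (lv c n).2 + (lv c n).1.length := rfl
    have : (2:ℕ)^(n+2) = 2^(n+1) + 2^(n+1) := by ring
    have : (2:ℕ)^(n+1) = 2^n + 2^n := by ring
    rw [e1, e2]
    omega

lemma lv_congr {c c' : ℕ → Fin 3} : ∀ n, (∀ i < 2^(n+1), c i = c' i) →
    lv c n = lv c' n
  | 0, _ => by simp [lv]
  | n+1, h => by
    have hlt : (2:ℕ)^(n+1) < 2^(n+2) := by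
      have : (2:ℕ)^(n+2) = 2^(n+1) + 2^(n+1) := by ring
      have : (0:ℕ) < 2^(n+1) := Nat.pow_pos (by norm_num)
      omega
    have ih := lv_congr n (fun i hi => h i (lt_trans hi hlt))
    simp only [lv, ih]
    congr 1
    apply kids_congr
    intro j hj
    apply h
    have := (lv_bound c' n).2
    calc (lv c' n).2 + j < (lv c' n).2 + (lv c' n).1.length := by omega
    _ ≤ 2^(n+1) := this
    _ < 2^(n+2) := hlt

lemma nil_mem_Tset (c : ℕ → Fin 3) : [] ∈ Tset c := by simp [Tset, lv]

lemma mem_Tset_concat {c : ℕ → Fin 3} {s : List Bool} {b : Bool} :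
    s ++ [b] ∈ Tset c ↔ ∃ j, (lv c s.length).1[j]? = some s ∧
      keep (c ((lv c s.length).2 + j)) b = true := by
  have hlen : (s ++ [b]).length = s.length + 1 := by simp
  constructor
  · intro h
    have h' : s ++ [b] ∈ (lv c (s.length + 1)).1 := by rwa [Tset, Set.mem_setOf_eq, hlen] at h
    rcases mem_kids.mp h' with ⟨j, t, b', hget, hb', heq⟩
    have h2 := List.append_inj' heq (by simp)
    obtain ⟨rfl, h3⟩ := h2
    simp only [List.cons.injEq] at h3
    exact ⟨j, hget, by rw [h3.1]; exact hb'⟩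
  · rintro ⟨j, hget, hk⟩
    show s ++ [b] ∈ (lv c (s ++ [b]).length).1
    rw [hlen]
    exact mem_kids.mpr ⟨j, s, b, hget, hk, rfl⟩

lemma Tset_down {c : ℕ → Fin 3} {s : List Bool} {b : Bool} (h : s ++ [b] ∈ Tset c) :
    s ∈ Tset c := by
  rcases mem_Tset_concat.mp h with ⟨j, hget, _⟩
  exact List.mem_of_getElem? hget

lemma Tset_pruned {c : ℕ → Fin 3} {s : List Bool} (h : s ∈ Tset c) :
    ∃ b, s ++ [b] ∈ Tset c := by
  rcases List.mem_iff_getElem?.mp h with ⟨j, hget⟩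
  rcases keep_or (c ((lv c s.length).2 + j)) with hk | hk
  · exact ⟨false, mem_Tset_concat.mpr ⟨j, hget, hk⟩⟩
  · exact ⟨true, mem_Tset_concat.mpr ⟨j, hget, hk⟩⟩

lemma Tset_trit_recover {c : ℕ → Fin 3} {n j : ℕ} {s : List Bool}
    (hget : (lv c n).1[j]? = some s) (b : Bool) :
    (s ++ [b] ∈ Tset c) ↔ keep (c ((lv c n).2 + j)) b = true := by
  have hsl : s.length = n := lv_length n s (List.mem_of_getElem? hget)
  rw [mem_Tset_concat, hsl]
  constructor
  · rintro ⟨j', hget', hk⟩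
    have hj' : j' < (lv c n).1.length := (List.getElem?_eq_some_iff.mp hget').1
    have : j' = j := (List.getElem?_inj hj' (lv_nodup c n)).mp (by rw [hget, hget'])
    subst this
    exact hk
  · intro hk
    exact ⟨j, hget, hk⟩

lemma Tset_inj {c c' : ℕ → Fin 3} (h : Tset c = Tset c') : c = c' := by
  have helper : ∀ n, lv c n = lv c' n →
      ∀ j < (lv c n).1.length, c ((lv c n).2 + j) = c' ((lv c n).2 + j) := by
    intro n hlv j hj
    obtain ⟨s, hget⟩ : ∃ s, (lv c n).1[j]? = some s :=
      ⟨_, List.getElem?_eq_some_iff.mpr ⟨hj, rfl⟩⟩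
    have hget' : (lv c' n).1[j]? = some s := by rw [← hlv]; exact hget
    have h1 := Tset_trit_recover (c := c) hget
    have h2 := Tset_trit_recover (c := c') hget'
    rw [← hlv] at h2
    apply keep_inj (t := c ((lv c n).2 + j)) (t' := c' ((lv c n).2 + j))
    · apply Bool.eq_iff_iff.mpr
      rw [← h1 false, ← h2 false, h]
    · apply Bool.eq_iff_iff.mpr
      rw [← h1 true, ← h2 true, h]
  have key : ∀ n, lv c n = lv c' n ∧
      ∀ i < (lv c n).2 + (lv c n).1.length, c i = c' i := by
    intro n
    induction n with
    | zero =>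
      refine ⟨rfl, ?_⟩
      intro i hi
      have e1 : (lv c 0).2 = 0 := rfl
      have e2 : (lv c 0).1.length = 1 := rfl
      have : i = 0 := by omega
      subst this
      have := helper 0 rfl 0 (by rw [e2]; omega)
      simpa [e1] using this
    | succ n ih =>
      obtain ⟨hlv, hP⟩ := ih
      have hlv1 : lv c (n+1) = lv c' (n+1) := by
        show (kids c (lv c n).1 (lv c n).2, _) = (kids c' (lv c' n).1 (lv c' n).2, _)
        rw [← hlv]
        refine Prod.ext ?_ rfl
        exact kids_congr (helper n hlv)
      refine ⟨hlv1, ?_⟩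
      intro i hi
      have hoff : (lv c (n+1)).2 = (lv c n).2 + (lv c n).1.length := rfl
      by_cases hc : i < (lv c n).2 + (lv c n).1.length
      · exact hP i hc
      · have : ∃ j, j < (lv c (n+1)).1.length ∧ i = (lv c (n+1)).2 + j :=
          ⟨i - (lv c (n+1)).2, by omega, by omega⟩
        rcases this with ⟨j, hj, rfl⟩
        exact helper (n+1) hlv1 j hj
  funext i
  apply (key (i+1)).2
  have h2 := lv_off_ge c (i+1)
  omega

lemma Tset_take {c : ℕ → Fin 3} {t : List Bool} (h : t ∈ Tset c) :
    ∀ k, t.take k ∈ Tset c := by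
  induction t using List.reverseRecOn with
  | nil => intro k; simpa using nil_mem_Tset c
  | append_singleton l a ih =>
    intro k
    by_cases hk : l.length + 1 ≤ k
    · rwa [List.take_of_length_le (by simpa using hk)]
    · have hk' : k ≤ l.length := by omega
      rw [List.take_append_of_le_length hk']
      exact ih (Tset_down h) k

open scoped Classical in
/-- extend a node of the tree to longer and longer nodes -/
noncomputable def extb (c : ℕ → Fin 3) (s : List Bool) : ℕ → List Bool
  | 0 => s
  | m+1 => extb c s m ++ [if (extb c s m ++ [false]) ∈ Tset c then false else true]

lemma extb_length (c : ℕ → Fin 3) (s : List Bool) : ∀ m, (extb c s m).length = s.length + m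
  | 0 => rfl
  | m+1 => by simp [extb, extb_length c s m]; omega

lemma extb_mem {c : ℕ → Fin 3} {s : List Bool} (h : s ∈ Tset c) :
    ∀ m, extb c s m ∈ Tset c
  | 0 => h
  | m+1 => by
    have hm := extb_mem h m
    by_cases hf : (extb c s m ++ [false]) ∈ Tset c
    · simpa [extb, hf] using hf
    · rcases Tset_pruned hm with ⟨b, hb⟩
      cases b with
      | false => exact absurd hb hf
      | true => simpa [extb, hf] using hb

lemma extb_prefix (c : ℕ → Fin 3) (s : List Bool) {m m' : ℕ} (h : m ≤ m') :
    extb c s m <+: extb c s m' := by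
  induction m' with
  | zero => rw [Nat.le_zero.mp h]
  | succ m' ih =>
    by_cases h' : m = m' + 1
    · rw [h']
    · exact (ih (by omega)).trans (List.prefix_append _ _)

/-- the branch through node `s` -/
noncomputable def brch (c : ℕ → Fin 3) (s : List Bool) (n : ℕ) : Bool :=
  (extb c s (n+1)).getD n false

lemma res_brch (c : ℕ → Fin 3) (s : List Bool) : ∀ n, res (brch c s) n = (extb c s n).take n
  | 0 => rfl
  | n+1 => by
    have hlen : n ≤ (extb c s n).length := by rw [extb_length]; omega
    have hlen1 : n < (extb c s (n+1)).length := by rw [extb_length]; omega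
    rw [res_succ, res_brch c s n]
    have h1 : (extb c s (n+1)).take n = (extb c s n).take n := by
      show ((extb c s n) ++ _).take n = _
      exact List.take_append_of_le_length hlen
    have h2 : brch c s n = (extb c s (n+1))[n] := List.getD_eq_getElem _ _ hlen1
    rw [List.take_succ, ← h1, List.getElem?_eq_getElem hlen1, h2]
    rfl

lemma brch_mem {c : ℕ → Fin 3} {s : List Bool} (h : s ∈ Tset c) (n : ℕ) :
    res (brch c s) n ∈ Tset c := by
  rw [res_brch]
  exact Tset_take (extb_mem h n) n

lemma res_brch_self {c : ℕ → Fin 3} (s : List Bool) :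
    res (brch c s) s.length = s := by
  rw [res_brch]
  have hp : s <+: extb c s s.length := extb_prefix c s (Nat.zero_le _)
  exact (List.prefix_iff_eq_take.mp hp).symm

/-- the set of branches of the tree coded by `c` -/
def Br (c : ℕ → Fin 3) : Set (ℕ → Bool) := {y | ∀ n, res y n ∈ Tset c}

lemma mem_Tset_iff_branch {c : ℕ → Fin 3} {s : List Bool} :
    s ∈ Tset c ↔ ∃ y ∈ Br c, res y s.length = s := by
  constructor
  · intro h
    exact ⟨brch c s, fun n => brch_mem h n, res_brch_self s⟩
  · rintro ⟨y, hy, hres⟩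
    exact hres ▸ hy s.length

lemma Br_nonempty (c : ℕ → Fin 3) : (Br c).Nonempty :=
  ⟨brch c [], fun n => brch_mem (nil_mem_Tset c) n⟩

lemma Tset_eq_of_Br_eq {c c' : ℕ → Fin 3} (h : Br c = Br c') : Tset c = Tset c' := by
  ext s
  rw [mem_Tset_iff_branch, mem_Tset_iff_branch, h]
section surj
open scoped Classical

variable (Tr : Set (List Bool))

/-- branching type of a node determined by which children lie in the tree -/
noncomputable def tritOf (s : List Bool) : Fin 3 :=
  if (s ++ [false]) ∈ Tr then (if (s ++ [true]) ∈ Tr then 2 else 0) else 1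

/-- children of a node that lie in the tree -/
noncomputable def filtKids (s : List Bool) : List (List Bool) :=
  (if (s ++ [false]) ∈ Tr then [s ++ [false]] else []) ++
    (if (s ++ [true]) ∈ Tr then [s ++ [true]] else [])

lemma childrenOf_tritOf {s : List Bool} (h : (s ++ [false]) ∈ Tr ∨ (s ++ [true]) ∈ Tr) :
    childrenOf s (tritOf Tr s) = filtKids Tr s := by
  unfold childrenOf filtKids tritOf
  by_cases h0 : (s ++ [false]) ∈ Tr <;> by_cases h1 : (s ++ [true]) ∈ Tr <;>
    simp [h0, h1, keep] <;> tauto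

lemma mem_filtKids {s u : List Bool} :
    u ∈ filtKids Tr s ↔ ∃ b, u = s ++ [b] ∧ u ∈ Tr := by
  unfold filtKids
  constructor
  · intro h
    rcases List.mem_append.mp h with h | h
    · split at h
      · next hc => simp at h; exact ⟨false, h, h ▸ hc⟩
      · simp at h
    · split at h
      · next hc => simp at h; exact ⟨true, h, h ▸ hc⟩
      · simp at h
  · rintro ⟨b, rfl, hu⟩
    cases b
    · exact List.mem_append.mpr (Or.inl (by simp [hu]))
    · exact List.mem_append.mpr (Or.inr (by simp [hu]))

noncomputable def kidsT : List (List Bool) → List (List Bool)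
  | [] => []
  | s :: L => filtKids Tr s ++ kidsT L

/-- levels of the abstract tree -/
noncomputable def lvT : ℕ → List (List Bool) × ℕ
  | 0 => ([[]], 0)
  | n+1 => (kidsT Tr (lvT n).1, (lvT n).2 + (lvT n).1.length)

variable {Tr}

lemma mem_kidsT {L : List (List Bool)} {u : List Bool} :
    u ∈ kidsT Tr L ↔ ∃ s ∈ L, ∃ b, u = s ++ [b] ∧ u ∈ Tr := by
  induction L with
  | nil => simp [kidsT]
  | cons s L ih =>
    simp only [kidsT, List.mem_append, ih, List.mem_cons, mem_filtKids]
    constructor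
    · rintro (⟨b, rfl, hu⟩ | ⟨t, ht, b, rfl, hu⟩)
      · exact ⟨s, Or.inl rfl, b, rfl, hu⟩
      · exact ⟨t, Or.inr ht, b, rfl, hu⟩
    · rintro ⟨t, (rfl | ht), b, rfl, hu⟩
      · exact Or.inl ⟨b, rfl, hu⟩
      · exact Or.inr ⟨t, ht, b, rfl, hu⟩

lemma mem_lvT (hnil : [] ∈ Tr) (hdown : ∀ (s : List Bool) (b : Bool), s ++ [b] ∈ Tr → s ∈ Tr) :
    ∀ n, ∀ s, s ∈ (lvT Tr n).1 ↔ (s ∈ Tr ∧ s.length = n)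
  | 0 => by
    intro s
    show s ∈ [[]] ↔ _
    constructor
    · intro h; simp at h; subst h; exact ⟨hnil, rfl⟩
    · rintro ⟨_, h⟩; simp [List.length_eq_zero_iff.mp h]
  | n+1 => by
    intro s
    show s ∈ kidsT Tr (lvT Tr n).1 ↔ _
    rw [mem_kidsT]
    constructor
    · rintro ⟨t, ht, b, rfl, hu⟩
      have := (mem_lvT hnil hdown n t).mp ht
      exact ⟨hu, by simp [this.2]⟩
    · rintro ⟨hs, hl⟩
      rcases List.eq_nil_or_concat s with rfl | ⟨t, b, rfl⟩
      · simp at hl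
      · rw [List.concat_eq_append] at hs hl ⊢
        have hlt : t.length = n := by simp at hl; omega
        have htT : t ∈ Tr := hdown t b hs
        exact ⟨t, (mem_lvT hnil hdown n t).mpr ⟨htT, hlt⟩, b, rfl, hs⟩

lemma exists_len (hnil : [] ∈ Tr) (hpr : ∀ s ∈ Tr, ∃ b, s ++ [b] ∈ Tr) :
    ∀ n, ∃ s ∈ Tr, s.length = n
  | 0 => ⟨[], hnil, rfl⟩
  | n+1 => by
    rcases exists_len hnil hpr n with ⟨s, hs, hl⟩
    rcases hpr s hs with ⟨b, hb⟩
    exact ⟨s ++ [b], hb, by simp [hl]⟩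

variable (hnil : [] ∈ Tr) (hpr : ∀ s ∈ Tr, ∃ b, s ++ [b] ∈ Tr)
  (hdown : ∀ (s : List Bool) (b : Bool), s ++ [b] ∈ Tr → s ∈ Tr)

include hnil hpr hdown

lemma lvT_ne_nil (n : ℕ) : (lvT Tr n).1 ≠ [] := by
  rcases exists_len hnil hpr n with ⟨s, hs, hl⟩
  exact List.ne_nil_of_mem ((mem_lvT hnil hdown n s).mpr ⟨hs, hl⟩)

lemma lvT_off_lt (n : ℕ) : (lvT Tr n).2 < (lvT Tr (n+1)).2 := by
  have h0 := lvT_ne_nil hnil hpr hdown n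
  have : (lvT Tr n).1.length ≠ 0 := by simpa [List.length_eq_zero_iff] using h0
  show (lvT Tr n).2 < (lvT Tr n).2 + (lvT Tr n).1.length
  omega

lemma lvT_off_mono : ∀ {m n : ℕ}, m < n → (lvT Tr m).2 < (lvT Tr n).2 := by
  intro m n h
  induction n with
  | zero => omega
  | succ n ih =>
    rcases Nat.lt_succ_iff_lt_or_eq.mp h with h' | h'
    · exact lt_trans (ih h') (lvT_off_lt hnil hpr hdown n)
    · subst h'; exact lvT_off_lt hnil hpr hdown m

lemma lvT_off_ge : ∀ n, n ≤ (lvT Tr n).2 := by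
  intro n
  induction n with
  | zero => simp [lvT]
  | succ n ih => exact lt_of_le_of_lt ih (lvT_off_lt hnil hpr hdown n)

end surj
section code
open scoped Classical

variable (Tr : Set (List Bool))

noncomputable def lvlIdx (i : ℕ) : ℕ :=
  if h : ∃ n, i < (lvT Tr (n+1)).2 then Nat.find h else 0

/-- the stream coding the abstract tree -/
noncomputable def codeT (i : ℕ) : Fin 3 :=
  match (lvT Tr (lvlIdx Tr i)).1[i - (lvT Tr (lvlIdx Tr i)).2]? with
  | some s => tritOf Tr s
  | none => 0

variable {Tr}
variable (hnil : [] ∈ Tr) (hpr : ∀ s ∈ Tr, ∃ b, s ++ [b] ∈ Tr)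
  (hdown : ∀ (s : List Bool) (b : Bool), s ++ [b] ∈ Tr → s ∈ Tr)

include hnil hpr hdown

lemma lvlIdx_eq {n j : ℕ} (hj : j < (lvT Tr n).1.length) :
    lvlIdx Tr ((lvT Tr n).2 + j) = n := by
  set i := (lvT Tr n).2 + j with hi
  have hlt : i < (lvT Tr (n+1)).2 := by
    show i < (lvT Tr n).2 + (lvT Tr n).1.length
    omega
  have hex : ∃ m, i < (lvT Tr (m+1)).2 := ⟨n, hlt⟩
  rw [lvlIdx, dif_pos hex]
  rw [Nat.find_eq_iff]
  refine ⟨hlt, ?_⟩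
  intro m hm
  push_neg
  have h1 : (lvT Tr (m+1)).2 ≤ (lvT Tr n).2 := by
    rcases Nat.lt_or_ge (m+1) n with h' | h'
    · exact le_of_lt (lvT_off_mono hnil hpr hdown h')
    · have : m + 1 = n := by omega
      rw [this]
  omega

lemma codeT_eq {n j : ℕ} {s : List Bool} (hget : (lvT Tr n).1[j]? = some s) :
    codeT Tr ((lvT Tr n).2 + j) = tritOf Tr s := by
  have hj : j < (lvT Tr n).1.length := (List.getElem?_eq_some_iff.mp hget).1
  rw [codeT, lvlIdx_eq hnil hpr hdown hj]
  have : (lvT Tr n).2 + j - (lvT Tr n).2 = j := by omega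
  rw [this, hget]

omit hnil hpr hdown in
lemma kids_eq_kidsT : ∀ (L : List (List Bool)) (i : ℕ),
    (∀ j s, L[j]? = some s → childrenOf s (codeT Tr (i+j)) = filtKids Tr s) →
    kids (codeT Tr) L i = kidsT Tr L
  | [], _, _ => rfl
  | s :: L, i, h => by
    show childrenOf s (codeT Tr i) ++ _ = filtKids Tr s ++ _
    congr 1
    · have := h 0 s rfl
      simpa using this
    · apply kids_eq_kidsT L (i+1)
      intro j t hg
      have := h (j+1) t (by simpa using hg)
      rwa [show i + (j+1) = i + 1 + j by omega] at this

lemma lv_codeT : ∀ n, lv (codeT Tr) n = lvT Tr n := by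
  intro n
  induction n with
  | zero => rfl
  | succ n ih =>
    show (kids (codeT Tr) (lv (codeT Tr) n).1 (lv (codeT Tr) n).2, _) = (kidsT Tr (lvT Tr n).1, _)
    rw [ih]
    refine Prod.ext ?_ rfl
    apply kids_eq_kidsT
    intro j s hget
    rw [codeT_eq hnil hpr hdown hget]
    apply childrenOf_tritOf
    have hs : s ∈ Tr := ((mem_lvT hnil hdown n s).mp (List.mem_of_getElem? hget)).1
    rcases hpr s hs with ⟨b, hb⟩
    cases b
    · exact Or.inl hb
    · exact Or.inr hb

lemma Tset_codeT : Tset (codeT Tr) = Tr := by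
  ext s
  rw [Tset, Set.mem_setOf_eq, lv_codeT hnil hpr hdown, mem_lvT hnil hdown]
  simp

end code
section decode

/-- position in the bit stream where the `k`-th trit's codeword starts -/
def pos (x : ℕ → Bool) : ℕ → ℕ
  | 0 => 0
  | k+1 => pos x k + (if x (pos x k) then 2 else 1)

/-- decode a bit stream into a trit stream via the prefix code
`false ↦ 0`, `[true, false] ↦ 1`, `[true, true] ↦ 2` -/
def dec (x : ℕ → Bool) (k : ℕ) : Fin 3 :=
  if x (pos x k) then (if x (pos x k + 1) then 2 else 1) else 0

lemma pos_ge (x : ℕ → Bool) : ∀ k, k ≤ pos x k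
  | 0 => le_refl 0
  | k+1 => by
    have := pos_ge x k
    show k + 1 ≤ pos x k + _
    split <;> omega

lemma pos_le (x : ℕ → Bool) : ∀ k, pos x k ≤ 2 * k
  | 0 => le_refl 0
  | k+1 => by
    have := pos_le x k
    show pos x k + _ ≤ 2 * (k + 1)
    split <;> omega

lemma dec_inj {x x' : ℕ → Bool} (h : dec x = dec x') : x = x' := by
  have key : ∀ k, pos x k = pos x' k ∧ ∀ i < pos x k, x i = x' i := by
    intro k
    induction k with
    | zero => exact ⟨rfl, by intro i hi; simp [pos] at hi⟩
    | succ k ih =>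
      obtain ⟨hp, ha⟩ := ih
      have hd : dec x k = dec x' k := congrFun h k
      unfold dec at hd
      rw [← hp] at hd
      have hx : x (pos x k) = x' (pos x k) := by
        by_cases h1 : x (pos x k) <;> by_cases h2 : x' (pos x k) <;>
          simp [h1, h2] at hd ⊢ <;> split at hd <;> simp_all
      constructor
      · show pos x k + _ = pos x' k + _
        rw [← hp, ← hx]
      · intro i hi
        have hstep : pos x (k+1) = pos x k + (if x (pos x k) then 2 else 1) := rfl
        rw [hstep] at hi
        by_cases h1 : x (pos x k)
        · rw [if_pos h1] at hi
          rcases Nat.lt_or_ge i (pos x k) with h' | h'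
          · exact ha i h'
          · rcases Nat.lt_or_ge i (pos x k + 1) with h'' | h''
            · have : i = pos x k := by omega
              rw [this]; exact hx
            · have hieq : i = pos x k + 1 := by omega
              have h2 : x' (pos x k) = true := by rw [← hx]; exact h1
              rw [if_pos h1, if_pos h2] at hd
              by_cases h3 : x (pos x k + 1) <;> by_cases h4 : x' (pos x k + 1) <;>
                simp [h3, h4] at hd <;> simp [hieq, h3, h4]
        · rw [if_neg h1] at hi
          rcases Nat.lt_or_ge i (pos x k) with h' | h'
          · exact ha i h'
          · have : i = pos x k := by omega
            rw [this]; exact hx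
  funext i
  have h1 := (key (i+1)).2
  apply h1
  have := pos_ge x (i+1)
  omega

/-- codeword of a trit -/
def cw : Fin 3 → List Bool := fun t =>
  if t = 0 then [false] else if t = 1 then [true, false] else [true, true]

/-- concatenation of the codewords of the first `k` trits -/
def bitsUpTo (c : ℕ → Fin 3) : ℕ → List Bool
  | 0 => []
  | k+1 => bitsUpTo c k ++ cw (c k)

/-- encode a trit stream as a bit stream -/
def enc (c : ℕ → Fin 3) (n : ℕ) : Bool := (bitsUpTo c (n+1)).getD n false

lemma cw_length (t : Fin 3) : 1 ≤ (cw t).length ∧ (cw t).length ≤ 2 := by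
  unfold cw; split <;> [simp; split <;> simp]

lemma bitsUpTo_length (c : ℕ → Fin 3) : ∀ k, k ≤ (bitsUpTo c k).length
  | 0 => le_refl 0
  | k+1 => by
    have h1 := bitsUpTo_length c k
    have h2 := cw_length (c k)
    show k + 1 ≤ (bitsUpTo c k ++ cw (c k)).length
    rw [List.length_append]
    omega

lemma bitsUpTo_prefix (c : ℕ → Fin 3) {k k' : ℕ} (h : k ≤ k') :
    bitsUpTo c k <+: bitsUpTo c k' := by
  induction k' with
  | zero => rw [Nat.le_zero.mp h]
  | succ k' ih =>
    by_cases h' : k = k' + 1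
    · rw [h']
    · exact (ih (by omega)).trans (List.prefix_append _ _)

lemma enc_eq_getD (c : ℕ → Fin 3) {n k : ℕ} (h : n < (bitsUpTo c k).length) :
    enc c n = (bitsUpTo c k).getD n false := by
  have h1 : n < (bitsUpTo c (n+1)).length := lt_of_lt_of_le (by omega) (bitsUpTo_length c (n+1))
  unfold enc
  rcases Nat.le_total (n+1) k with hk | hk
  · rcases bitsUpTo_prefix c hk with ⟨r, hr⟩
    rw [← hr, List.getD_append _ _ _ _ h1]
  · rcases bitsUpTo_prefix c hk with ⟨r, hr⟩
    rw [← hr, List.getD_append _ _ _ _ h]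

lemma fin3 (t : Fin 3) : t = 0 ∨ t = 1 ∨ t = 2 := by revert t; decide

lemma enc_cw (c : ℕ → Fin 3) (k j : ℕ) (hj : j < (cw (c k)).length) :
    enc c ((bitsUpTo c k).length + j) = (cw (c k)).getD j false := by
  have hlen : (bitsUpTo c (k+1)).length = (bitsUpTo c k).length + (cw (c k)).length := by
    show (bitsUpTo c k ++ cw (c k)).length = _
    simp
  have h : (bitsUpTo c k).length + j < (bitsUpTo c (k+1)).length := by omega
  rw [enc_eq_getD c h]
  show (bitsUpTo c k ++ cw (c k)).getD _ _ = _
  rw [List.getD_append_right _ _ _ _ (by omega)]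
  congr 1
  omega

lemma pos_enc (c : ℕ → Fin 3) : ∀ k, pos (enc c) k = (bitsUpTo c k).length := by
  intro k
  induction k with
  | zero => rfl
  | succ k ih =>
    have h2 := cw_length (c k)
    have he := enc_cw c k 0 (by omega)
    rw [Nat.add_zero] at he
    show pos (enc c) k + (if enc c (pos (enc c) k) then 2 else 1)
      = (bitsUpTo c k ++ cw (c k)).length
    rw [ih, he, List.length_append]
    rcases fin3 (c k) with h | h | h <;> simp [h, cw]

lemma dec_enc (c : ℕ → Fin 3) : dec (enc c) = c := by
  funext k
  have h2 := cw_length (c k)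
  unfold dec
  rw [pos_enc c k]
  have he0 := enc_cw c k 0 (by omega)
  rw [Nat.add_zero] at he0
  rcases fin3 (c k) with h | h | h
  · rw [he0]
    simp [h, cw]
  · have he1 := enc_cw c k 1 (by rw [h]; simp [cw])
    rw [he0, he1]
    simp [h, cw]
  · have he1 := enc_cw c k 1 (by rw [h]; simp [cw])
    rw [he0, he1]
    simp [h, cw]

end decode
section topol

lemma pos_agree {x x' : ℕ → Bool} {N : ℕ} (h : ∀ i < N, x i = x' i) :
    ∀ k, 2 * k + 1 ≤ N → pos x k = pos x' k := by
  intro k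
  induction k with
  | zero => intro _; rfl
  | succ k ih =>
    intro hk
    have hp := ih (by omega)
    have hb : x (pos x k) = x' (pos x k) := by
      apply h
      have := pos_le x k
      omega
    show pos x k + _ = pos x' k + _
    rw [← hp, ← hb]

lemma dec_agree {x x' : ℕ → Bool} {N : ℕ} (h : ∀ i < N, x i = x' i) :
    ∀ k, 2 * k + 2 ≤ N → dec x k = dec x' k := by
  intro k hk
  have hp := pos_agree h k (by omega)
  have hple := pos_le x k
  have hb : x (pos x k) = x' (pos x k) := h _ (by omega)
  have hb1 : x (pos x k + 1) = x' (pos x k + 1) := h _ (by omega)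
  unfold dec
  rw [← hp, ← hb, ← hb1]

lemma mem_Tset_dec_agree {s : List Bool} {x x' : ℕ → Bool}
    (h : ∀ i < 2^(s.length+2)+2, x i = x' i) :
    (s ∈ Tset (dec x) ↔ s ∈ Tset (dec x')) := by
  have hlv : lv (dec x) s.length = lv (dec x') s.length := by
    apply lv_congr
    intro i hi
    apply dec_agree h
    have : (2:ℕ)^(s.length+2) = 2 * 2^(s.length+1) := by ring
    omega
  rw [Tset, Tset, Set.mem_setOf_eq, Set.mem_setOf_eq, hlv]

lemma isOpen_cyl (x : ℕ → Bool) (N : ℕ) : IsOpen {x' : ℕ → Bool | ∀ i < N, x' i = x i} := by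
  have : {x' : ℕ → Bool | ∀ i < N, x' i = x i} =
      ⋂ i : Fin N, (fun x' : ℕ → Bool => x' i.1) ⁻¹' {x i.1} := by
    ext x'
    simp only [Set.mem_setOf_eq, Set.mem_iInter, Set.mem_preimage, Set.mem_singleton_iff]
    exact ⟨fun h i => h i.1 i.2, fun h i hi => h ⟨i, hi⟩⟩
  rw [this]
  exact isOpen_iInter_of_finite fun i =>
    (continuous_apply i.1).isOpen_preimage _ (isOpen_discrete _)

lemma isOpen_of_findet {A : Set (ℕ → Bool)}
    (h : ∀ x ∈ A, ∃ N, ∀ x', (∀ i < N, x' i = x i) → x' ∈ A) : IsOpen A := by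
  rw [isOpen_iff_mem_nhds]
  intro x hx
  rcases h x hx with ⟨N, hN⟩
  rw [mem_nhds_iff]
  exact ⟨{x' | ∀ i < N, x' i = x i}, fun x' hx' => hN x' hx', isOpen_cyl x N, fun i _ => rfl⟩

lemma mem_closure_of_res {C : Set (ℕ → Bool)} {y : ℕ → Bool}
    (h : ∀ n, ∃ z ∈ C, res z n = res y n) : y ∈ closure C := by
  rw [mem_closure_iff]
  intro O hO hyO
  rcases isOpen_pi_iff.mp hO y hyO with ⟨I, u, hu, hsub⟩
  rcases h ((I.sup id) + 1) with ⟨z, hz, hres⟩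
  have hagree := agree_of_res_eq hres
  refine ⟨z, hsub ?_, hz⟩
  intro a ha
  have hle : a ≤ I.sup id := Finset.le_sup (f := id) ha
  have : z a = y a := hagree a (by omega)
  rw [this]
  exact (hu a ha).2

end topol

/-- the section of the universal set over a Cantor-space point:
the complement of the set of branches of the coded tree -/
def Usec (x : ℕ → Bool) : Set (ℕ → Bool) := {y | ∃ n, res y n ∉ Tset (dec x)}

lemma Usec_eq_compl (x : ℕ → Bool) : Usec x = (Br (dec x))ᶜ := by
  ext y
  simp only [Usec, Br, Set.mem_setOf_eq, Set.mem_compl_iff, not_forall]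

/-- The pair (X, Y) satisfies UU: there is an open set `U ⊆ X × Y` such that
every open `W ⊆ Y` is the cross section `{y | (x, y) ∈ U}` for exactly one `x`. -/
def UU (X Y : Type*) [TopologicalSpace X] [TopologicalSpace Y] : Prop :=
  ∃ U : Set (X × Y), IsOpen U ∧
    ∀ W : Set Y, IsOpen W → ∃! x : X, {y | (x, y) ∈ U} = W

theorem stmt_2 : UU ((ℕ → Bool) ⊕ Unit) (ℕ → Bool) := by
  classical
  refine ⟨{p | Sum.elim (fun x => p.2 ∈ Usec x) (fun _ => True) p.1}, ?_, ?_⟩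
  · -- openness
    have hU1 : IsOpen {q : (ℕ → Bool) × (ℕ → Bool) | q.2 ∈ Usec q.1} := by
      have he : {q : (ℕ → Bool) × (ℕ → Bool) | q.2 ∈ Usec q.1} =
          ⋃ s : List Bool, {x | s ∉ Tset (dec x)} ×ˢ {y | res y s.length = s} := by
        ext q
        simp only [Set.mem_setOf_eq, Set.mem_iUnion, Set.mem_prod, Usec]
        constructor
        · rintro ⟨n, hn⟩
          refine ⟨res q.2 n, hn, ?_⟩
          rw [res_length]
        · rintro ⟨s, h1, h2⟩
          exact ⟨s.length, by rw [h2]; exact h1⟩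
      rw [he]
      refine isOpen_iUnion fun s => IsOpen.prod ?_ ?_
      · apply isOpen_of_findet
        intro x hx
        refine ⟨2^(s.length+2)+2, fun x' hx' => ?_⟩
        have hiff := mem_Tset_dec_agree (s := s) (x := x') (x' := x) hx'
        intro hmem
        exact hx (hiff.mp hmem)
      · apply isOpen_of_findet
        intro y hy
        refine ⟨s.length, fun y' hy' => ?_⟩
        show res y' s.length = s
        rw [res_eq_of_agree hy']
        exact hy
    have himg : {p : ((ℕ → Bool) ⊕ Unit) × (ℕ → Bool) |
          Sum.elim (fun x => p.2 ∈ Usec x) (fun _ => True) p.1}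
        = (Prod.map Sum.inl id '' {q : (ℕ → Bool) × (ℕ → Bool) | q.2 ∈ Usec q.1})
          ∪ (Prod.map Sum.inr id '' (Set.univ : Set (Unit × (ℕ → Bool)))) := by
      ext ⟨x, y⟩
      cases x with
      | inl x =>
        simp only [Set.mem_setOf_eq, Sum.elim_inl, Set.mem_union, Set.mem_image, Prod.map,
          Prod.mk.injEq, Prod.exists]
        constructor
        · intro h
          exact Or.inl ⟨x, y, h, rfl, rfl⟩
        · rintro (⟨a, b, hab, h1, rfl⟩ | ⟨a, b, _, h1, _⟩)
          · rcases Sum.inl.inj h1 with rfl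
            exact hab
          · exact absurd h1 (by simp)
      | inr u =>
        refine iff_of_true trivial (Or.inr ⟨(u, y), trivial, rfl⟩)
    rw [himg]
    exact ((isOpenMap_inl.prodMap IsOpenMap.id) _ hU1).union
      ((isOpenMap_inr.prodMap IsOpenMap.id) _ isOpen_univ)
  · -- unique cross sections
    intro W hW
    by_cases hWu : W = Set.univ
    · refine ⟨Sum.inr (), ?_, ?_⟩
      · subst hWu
        ext y
        simp
      · rintro (x | u) hx
        · exfalso
          have hy : brch (dec x) [] ∈ Br (dec x) := fun n => brch_mem (nil_mem_Tset _) n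
          have hsec : Usec x = Set.univ := by rw [← hWu]; exact hx
          have hmem : brch (dec x) [] ∈ Usec x := by rw [hsec]; trivial
          rw [Usec_eq_compl] at hmem
          exact hmem hy
        · rfl
    · -- W ≠ univ
      set C := Wᶜ with hCdef
      have hC : IsClosed C := hW.isClosed_compl
      have hCne : C.Nonempty := Set.nonempty_compl.mpr hWu
      set Tr : Set (List Bool) := {s | ∃ y ∈ C, res y s.length = s} with hTrdef
      have hnil : [] ∈ Tr := by
        rcases hCne with ⟨y, hy⟩
        exact ⟨y, hy, rfl⟩
      have hpr : ∀ s ∈ Tr, ∃ b, s ++ [b] ∈ Tr := by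
        rintro s ⟨y, hy, hres⟩
        refine ⟨y s.length, y, hy, ?_⟩
        have hl : (s ++ [y s.length]).length = s.length + 1 := by simp
        rw [hl, res_succ, hres]
      have hdown : ∀ (s : List Bool) (b : Bool), s ++ [b] ∈ Tr → s ∈ Tr := by
        rintro s b ⟨y, hy, hres⟩
        have hl : (s ++ [b]).length = s.length + 1 := by simp
        rw [hl, res_succ] at hres
        have := List.append_inj hres (by rw [res_length])
        exact ⟨y, hy, this.1⟩
      set x : ℕ → Bool := enc (codeT Tr) with hxdef
      have key1 : Tset (dec x) = Tr := by
        rw [hxdef, dec_enc]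
        exact Tset_codeT hnil hpr hdown
      have key2 : Br (dec x) = C := by
        ext y
        constructor
        · intro hy
          have h1 : ∀ n, res y n ∈ Tr := by
            intro n
            have := hy n
            rwa [key1] at this
          have h2 : ∀ n, ∃ z ∈ C, res z n = res y n := by
            intro n
            rcases h1 n with ⟨z, hz, hres⟩
            rw [res_length] at hres
            exact ⟨z, hz, hres⟩
          have := mem_closure_of_res h2
          rwa [hC.closure_eq] at this
        · intro hy n
          rw [key1]
          exact ⟨y, hy, by rw [res_length]⟩
      refine ⟨Sum.inl x, ?_, ?_⟩
      · have husec : Usec x = W := by rw [Usec_eq_compl, key2, hCdef, compl_compl]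
        ext y
        simp only [Set.mem_setOf_eq, Sum.elim_inl]
        rw [husec]
      · rintro (x' | u) hx'
        · have hsec : Usec x' = W := hx'
          have hBr : Br (dec x') = C := by
            rw [Usec_eq_compl] at hsec
            rw [hCdef, ← hsec, compl_compl]
          have : Br (dec x') = Br (dec x) := by rw [hBr, key2]
          have hT := Tset_eq_of_Br_eq this
          have hd := Tset_inj hT
          have := dec_inj hd
          rw [this]
        · exfalso
          have hsec : (Set.univ : Set (ℕ → Bool)) = W := by
            rw [← hx']
            ext y
            simp only [Set.mem_setOf_eq, Set.mem_univ, iff_true]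
            trivial
          exact hWu hsec.symm
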